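/- Let α > β > 0, λ > 0, and P_peak > 0. Define P̂ = √((1/(2β) − 1/(2α))² + (1/β − 1/α)/(λ ln 2)) − 1/(2β) − 1/(2α) and P* = min(max(P̂, 0), P_peak). Then P* maximizes the function P ↦ log₂(1 + αP) − log₂(1 + βP) − λP over the interval [0, P_peak]. -/

import Mathlib

private lemma stmt7_key (α β lam l2 t : ℝ) (hβ : 0 < β) (hαβ : β < α) (hlam : 0 < lam)
    (hl2 : 0 < l2)
    (hs : t ^ 2 = (1 / (2 * β) - 1 / (2 * α)) ^ 2 + (1 / β - 1 / α) / (lam * l2)) :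
    lam * l2 * ((1 + α * (t - 1 / (2 * β) - 1 / (2 * α))) *
      (1 + β * (t - 1 / (2 * β) - 1 / (2 * α)))) = α - β := by
  have hα : 0 < α := hβ.trans hαβ
  have hL : lam * l2 ≠ 0 := by positivity
  field_simp at hs ⊢
  linear_combination hs

set_option maxHeartbeats 800000 in
/-- The clipped water-filling power `P* = min(max(P̂,0), P_peak)` maximizes the
Lagrangian `P ↦ log₂(1+αP) − log₂(1+βP) − λP` over `[0, P_peak]`. -/
theorem stmt_7 (α β lam Ppeak : ℝ) (hβ : 0 < β) (hαβ : β < α) (hlam : 0 < lam)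
    (hPpeak : 0 < Ppeak) :
    let Phat : ℝ :=
      Real.sqrt ((1 / (2 * β) - 1 / (2 * α)) ^ 2 + (1 / β - 1 / α) / (lam * Real.log 2)) -
        1 / (2 * β) - 1 / (2 * α)
    let Pstar : ℝ := min (max Phat 0) Ppeak
    Pstar ∈ Set.Icc (0 : ℝ) Ppeak ∧
    ∀ P ∈ Set.Icc (0 : ℝ) Ppeak,
      Real.logb 2 (1 + α * P) - Real.logb 2 (1 + β * P) - lam * P ≤
        Real.logb 2 (1 + α * Pstar) - Real.logb 2 (1 + β * Pstar) - lam * Pstar := by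
  intro Phat Pstar
  have hα : 0 < α := hβ.trans hαβ
  have hl2 : 0 < Real.log 2 := Real.log_pos (by norm_num)
  have hL : 0 < lam * Real.log 2 := mul_pos hlam hl2
  set D : ℝ := (1 / (2 * β) - 1 / (2 * α)) ^ 2 + (1 / β - 1 / α) / (lam * Real.log 2) with hDdef
  have hdiff : 0 < 1 / β - 1 / α := by
    rw [sub_pos]
    exact one_div_lt_one_div_of_lt hβ hαβ
  have hDpos : 0 < D := by
    rw [hDdef]
    have : 0 < (1 / β - 1 / α) / (lam * Real.log 2) := div_pos hdiff hL
    positivity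
  have hsqrt : Real.sqrt D ^ 2 = D := Real.sq_sqrt hDpos.le
  have hsqrtpos : 0 < Real.sqrt D := Real.sqrt_pos.mpr hDpos
  have hPhat : Phat = Real.sqrt D - 1 / (2 * β) - 1 / (2 * α) := rfl
  have hPhatlb : -(1 / (2 * β) + 1 / (2 * α)) < Phat := by
    rw [hPhat]; linarith
  have hPstardef : Pstar = min (max Phat 0) Ppeak := rfl
  clear_value D Phat Pstar
  -- key identity: lam * log 2 * (1+α Phat)(1+β Phat) = α - β
  have hkey : lam * Real.log 2 * ((1 + α * Phat) * (1 + β * Phat)) = α - β := by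
    rw [hPhat]
    exact stmt7_key α β lam (Real.log 2) (Real.sqrt D) hβ hαβ hlam hl2
      (by rw [hsqrt]; exact hDdef)
  set f : ℝ → ℝ := fun P => Real.logb 2 (1 + α * P) - Real.logb 2 (1 + β * P) - lam * P with hf
  -- derivative
  have hder : ∀ P : ℝ, 0 ≤ P →
      HasDerivAt f (α / (1 + α * P) / Real.log 2 - β / (1 + β * P) / Real.log 2 - lam) P := by
    intro P hP
    have hA : (0:ℝ) < 1 + α * P := by nlinarith
    have hB : (0:ℝ) < 1 + β * P := by nlinarith
    have h1 : HasDerivAt (fun P : ℝ => 1 + α * P) α P := by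
      simpa using ((hasDerivAt_id P).const_mul α).const_add 1
    have h2 : HasDerivAt (fun P : ℝ => 1 + β * P) β P := by
      simpa using ((hasDerivAt_id P).const_mul β).const_add 1
    have h3 := (h1.log hA.ne').div_const (Real.log 2)
    have h4 := (h2.log hB.ne').div_const (Real.log 2)
    have h5 : HasDerivAt (fun P : ℝ => lam * P) lam P := by
      simpa using (hasDerivAt_id P).const_mul lam
    have := (h3.sub h4).sub h5
    simp only [hf, Real.logb]
    exact this
  -- sign of derivative
  have hpos : ∀ P : ℝ, 0 ≤ P → P < Phat →
      0 < α / (1 + α * P) / Real.log 2 - β / (1 + β * P) / Real.log 2 - lam := by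
    intro P hP hPlt
    have hA : (0:ℝ) < 1 + α * P := by nlinarith
    have hB : (0:ℝ) < 1 + β * P := by nlinarith
    have hprod : (1 + α * P) * (1 + β * P) < (1 + α * Phat) * (1 + β * Phat) := by
      nlinarith [mul_pos (sub_pos.mpr hPlt) (by nlinarith [mul_pos hα hβ] :
        (0:ℝ) < α + β + α * β * (P + Phat))]
    have hnum : 0 < α - β - lam * Real.log 2 * ((1 + α * P) * (1 + β * P)) := by
      nlinarith
    have heq : α / (1 + α * P) / Real.log 2 - β / (1 + β * P) / Real.log 2 - lam =
        (α - β - lam * Real.log 2 * ((1 + α * P) * (1 + β * P))) /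
          ((1 + α * P) * (1 + β * P) * Real.log 2) := by
      field_simp
      ring
    rw [heq]
    positivity
  have hneg : ∀ P : ℝ, 0 ≤ P → Phat < P →
      α / (1 + α * P) / Real.log 2 - β / (1 + β * P) / Real.log 2 - lam < 0 := by
    intro P hP hPlt
    have hA : (0:ℝ) < 1 + α * P := by nlinarith
    have hB : (0:ℝ) < 1 + β * P := by nlinarith
    have hq : (0:ℝ) < α + β + α * β * (P + Phat) := by
      have h1 : α * β * (1 / (2 * β) + 1 / (2 * α)) = α / 2 + β / 2 := by
        field_simp
      nlinarith [mul_lt_mul_of_pos_left hPhatlb (mul_pos hα hβ),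
        mul_nonneg (mul_pos hα hβ).le hP]
    have hprod : (1 + α * Phat) * (1 + β * Phat) < (1 + α * P) * (1 + β * P) := by
      nlinarith [mul_pos (sub_pos.mpr hPlt) hq]
    have hnum : α - β - lam * Real.log 2 * ((1 + α * P) * (1 + β * P)) < 0 := by
      nlinarith
    have heq : α / (1 + α * P) / Real.log 2 - β / (1 + β * P) / Real.log 2 - lam =
        (α - β - lam * Real.log 2 * ((1 + α * P) * (1 + β * P))) /
          ((1 + α * P) * (1 + β * P) * Real.log 2) := by
      field_simp
      ring
    rw [heq]
    exact div_neg_of_neg_of_pos hnum (by positivity)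
  have hPstar0 : 0 ≤ Pstar := by
    rw [hPstardef]; exact le_min (le_max_right Phat 0) hPpeak.le
  have hPstarP : Pstar ≤ Ppeak := by
    rw [hPstardef]; exact min_le_right _ _
  -- continuity
  have hcont : ContinuousOn f (Set.Icc 0 Ppeak) := fun x hx =>
    ((hder x hx.1).continuousAt).continuousWithinAt
  -- monotone on [0, Pstar]
  have hmono : MonotoneOn f (Set.Icc 0 Pstar) := by
    apply (strictMonoOn_of_deriv_pos (convex_Icc 0 Pstar)
      (hcont.mono (Set.Icc_subset_Icc le_rfl hPstarP)) ?_).monotoneOn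
    intro x hx
    rw [interior_Icc] at hx
    have hxPhat : x < Phat := by
      have h1 : Pstar ≤ max Phat 0 := by rw [hPstardef]; exact min_le_left _ _
      have h2 : (0:ℝ) < Pstar := hx.1.trans hx.2
      rcases le_or_gt Phat 0 with h | h
      · simp [max_eq_right h] at h1; linarith
      · calc x < Pstar := hx.2
          _ ≤ max Phat 0 := h1
          _ = Phat := max_eq_left h.le
    rw [(hder x hx.1.le).deriv]
    exact hpos x hx.1.le hxPhat
  -- antitone on [Pstar, Ppeak]
  have hanti : AntitoneOn f (Set.Icc Pstar Ppeak) := by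
    apply (strictAntiOn_of_deriv_neg (convex_Icc Pstar Ppeak)
      (hcont.mono (Set.Icc_subset_Icc hPstar0 le_rfl)) ?_).antitoneOn
    intro x hx
    rw [interior_Icc] at hx
    have hx0 : 0 ≤ x := hPstar0.trans hx.1.le
    have hxPhat : Phat < x := by
      have hPP : Pstar < Ppeak := hx.1.trans hx.2
      have h2 : max Phat 0 < Ppeak := by
        by_contra h
        push_neg at h
        rw [hPstardef, min_eq_right h] at hPP
        exact lt_irrefl _ hPP
      have : Pstar = max Phat 0 := by rw [hPstardef]; exact min_eq_left h2.le
      calc Phat ≤ max Phat 0 := le_max_left _ _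
        _ = Pstar := this.symm
        _ < x := hx.1
    rw [(hder x hx0).deriv]
    exact hneg x hx0 hxPhat
  refine ⟨⟨hPstar0, hPstarP⟩, ?_⟩
  intro P hP
  rcases le_total P Pstar with h | h
  · simpa only [hf] using hmono ⟨hP.1, h⟩ ⟨hPstar0, le_rfl⟩ h
  · simpa only [hf] using hanti ⟨le_rfl, hPstarP⟩ ⟨h, hP.2⟩ h
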